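/- Let (A, Con, |~) be a cumulative nonmonotonic system and B = (B, Con*, Δ) the canonical cumulative default structure constructed from it. Then every finite consistent set P ∈ Con has exactly one extension in B, namely δ(P) := P̃ ∪ {[Q] | Q ∈ Con, Q ⊆ P̃, Q̃ = P̃}. -/

import Mathlib

/-- A set is consistent if every finite subset of it lies in Con. -/
def IsCons {α : Type*} (Con : Set α → Prop) (S : Set α) : Prop :=
  ∀ X : Set α, X ⊆ S → X.Finite → Con X

/-- With trivial entailment: φ(x, S, 0) = x and
φ(x, S, i+1) = φ(x, S, i) ∪ {a | (X, a) ∈ Δ, X ⊆ φ(x, S, i), {a} ∪ S consistent}. -/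
def phiT {α : Type*} (Con : Set α → Prop) (Δ : Set (Set α × α)) (x S : Set α) :
    ℕ → Set α
  | 0 => x
  | i + 1 =>
      phiT Con Δ x S i ∪
        {a | ∃ X : Set α, (X, a) ∈ Δ ∧ X ⊆ phiT Con Δ x S i ∧ IsCons Con ({a} ∪ S)}

/-- Φ(x, S) = ⋃_{i≥0} φ(x, S, i). -/
def PhiT {α : Type*} (Con : Set α → Prop) (Δ : Set (Set α × α)) (x S : Set α) : Set α :=
  ⋃ i, phiT Con Δ x S i

/-- A consistent set y is an extension of x (x ε y) if Φ(x, y) = y. -/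
def ExtT {α : Type*} (Con : Set α → Prop) (Δ : Set (Set α × α)) (x y : Set α) : Prop :=
  IsCons Con y ∧ PhiT Con Δ x y = y

/-- X̃ := {t ∈ A | X |~ {t}}. -/
def Tilde {α : Type*} (snake : Set α → Set α → Prop) (X : Set α) : Set α :=
  {t | snake X {t}}

/-- The token set of the canonical default structure: tokens of A (`Sum.inl a`) together
with a fresh token [X] (`Sum.inr X`) for each X ∈ Con. -/
abbrev Tok (α : Type*) := α ⊕ Set α

/-- Δ := {(X, [X]) | X ∈ Con} ∪ {({[X]}, a) | X ∈ Con, X |~ {a}, a ∉ X}. -/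
def DeltaCan {α : Type*} (Con : Set α → Prop) (snake : Set α → Set α → Prop) :
    Set (Set (Tok α) × Tok α) :=
  {p | ∃ X : Set α, Con X ∧ p = (Sum.inl '' X, Sum.inr X)} ∪
  {p | ∃ (X : Set α) (a : α), Con X ∧ snake X {a} ∧ a ∉ X ∧
        p = ({Sum.inr X}, Sum.inl a)}

/-- For the cumulative construction: a finite W ⊆ B lies in Con* iff (1) W ∩ A ∈ Con,
(2) for every pair [X], [Y] ∈ W, X̃ = Ỹ, and (3) if [X] ∈ W then X |~ (W ∩ A). -/
def ConStarC {α : Type*} (Con : Set α → Prop) (snake : Set α → Set α → Prop)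
    (W : Set (Tok α)) : Prop :=
  W.Finite ∧
  Con (Sum.inl ⁻¹' W) ∧
  (∀ X Y : Set α, Sum.inr X ∈ W → Sum.inr Y ∈ W → Tilde snake X = Tilde snake Y) ∧
  (∀ X : Set α, Sum.inr X ∈ W → snake X (Sum.inl ⁻¹' W))

/-- δ(P) := P̃ ∪ {[Q] | Q ∈ Con, Q ⊆ P̃, Q̃ = P̃}. -/
def deltaP {α : Type*} (Con : Set α → Prop) (snake : Set α → Set α → Prop)
    (P : Set α) : Set (Tok α) :=
  Sum.inl '' Tilde snake P ∪
    {t | ∃ Q : Set α, Con Q ∧ Q ⊆ Tilde snake P ∧ Tilde snake Q = Tilde snake P ∧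
          t = Sum.inr Q}

lemma phiT_mono {α : Type*} (Con : Set α → Prop) (Δ : Set (Set α × α)) (x S : Set α) :
    Monotone (phiT Con Δ x S) :=
  monotone_nat_of_le_succ (fun _ => Set.subset_union_left)

lemma phiT_subset_PhiT {α : Type*} (Con : Set α → Prop) (Δ : Set (Set α × α)) (x S : Set α)
    (i : ℕ) : phiT Con Δ x S i ⊆ PhiT Con Δ x S :=
  Set.subset_iUnion (phiT Con Δ x S) i

lemma finite_subset_phiT {α : Type*} (Con : Set α → Prop) (Δ : Set (Set α × α)) (x S : Set α)
    {F : Set α} (hF : F.Finite) (h : F ⊆ PhiT Con Δ x S) : ∃ i, F ⊆ phiT Con Δ x S i := by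
  refine Set.Finite.induction_on (motive := fun F _ => F ⊆ PhiT Con Δ x S → ∃ i, F ⊆ phiT Con Δ x S i) _ hF (fun _ => ⟨0, Set.empty_subset _⟩) ?_ h
  intro a s _ _ ih hsub
  obtain ⟨i, hi⟩ := ih (fun t ht => hsub (Set.mem_insert_of_mem a ht))
  obtain ⟨j, hj⟩ := Set.mem_iUnion.mp (hsub (Set.mem_insert a s))
  exact ⟨max i j, Set.insert_subset
    (phiT_mono Con Δ x S (le_max_right i j) hj)
    (hi.trans (phiT_mono Con Δ x S (le_max_left i j)))⟩
/-- in the canonical cumulative default structure, every finite consistent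
set P ∈ Con has exactly one extension, namely δ(P). -/
theorem canonical_unique_extension {α : Type*} (Con : Set α → Prop)
    (snake : Set α → Set α → Prop)
    -- Con is a collection of finite subsets of A
    (hCfin : ∀ X : Set α, Con X → X.Finite)
    -- |~ is a relation between members of Con
    (hSnakeCon : ∀ X Y : Set α, snake X Y → Con X ∧ Con Y)
    (h1 : ∀ X Y : Set α, X ⊆ Y → Con Y → Con X)
    (h2 : ∀ a : α, Con {a})
    (h3 : ∀ X T : Set α, snake X T → Con (X ∪ T))
    (h4 : ∀ X Y : Set α, Y ⊆ X → Con X → snake X Y)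
    (h5 : ∀ X T Y : Set α, snake X T → snake (X ∪ T) Y → snake X Y)
    (h6 : ∀ X Y Z : Set α, snake X Y → snake X Z → snake X (Y ∪ Z))
    -- cautious monotony
    (hcm : ∀ (X : Set α) (a b : α), snake X {a} → snake X {b} → snake (X ∪ {a}) {b}) :
    ∀ P : Set α, Con P →
      ExtT (ConStarC Con snake) (DeltaCan Con snake) (Sum.inl '' P)
        (deltaP Con snake P) ∧
      ∀ W : Set (Tok α),
        ExtT (ConStarC Con snake) (DeltaCan Con snake) (Sum.inl '' P) W →
        W = deltaP Con snake P := by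
  intro P hP
  -- basic snake facts
  have hmemT : ∀ X : Set α, Con X → X ⊆ Tilde snake X := by
    intro X hX a ha
    exact h4 X {a} (Set.singleton_subset_iff.mpr ha) hX
  have hfs : ∀ X Y : Set α, Con X → Y.Finite → Y ⊆ Tilde snake X → snake X Y := by
    intro X Y hX hYfin
    refine Set.Finite.induction_on (motive := fun Y _ => Y ⊆ Tilde snake X → snake X Y) _ hYfin (fun _ => h4 X ∅ (Set.empty_subset X) hX) ?_
    intro a s _ _ ih hsub
    have h1' := ih (fun t ht => hsub (Set.mem_insert_of_mem a ht))
    have h2' : snake X {a} := hsub (Set.mem_insert a s)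
    have := h6 X {a} s h2' h1'
    rwa [Set.singleton_union] at this
  have hcmi : ∀ X Y : Set α, Con X → Y.Finite → Y ⊆ Tilde snake X →
      ∀ b, snake X {b} → snake (X ∪ Y) {b} := by
    intro X Y hX hYfin
    refine Set.Finite.induction_on (motive := fun Y _ => Y ⊆ Tilde snake X → ∀ b, snake X {b} → snake (X ∪ Y) {b}) _ hYfin (fun _ b hb => by rwa [Set.union_empty]) ?_
    intro a s _ _ ih hsub b hb
    have hsa : snake (X ∪ s) {a} := ih (fun t ht => hsub (Set.mem_insert_of_mem a ht))
      a (hsub (Set.mem_insert a s))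
    have hsb : snake (X ∪ s) {b} := ih (fun t ht => hsub (Set.mem_insert_of_mem a ht)) b hb
    have := hcm (X ∪ s) a b hsa hsb
    rw [Set.union_singleton] at this
    rwa [Set.union_insert]
  have htileq : ∀ X Y : Set α, Con X → Y.Finite → Y ⊆ Tilde snake X →
      Tilde snake (X ∪ Y) = Tilde snake X := by
    intro X Y hX hYfin hYsub
    ext b
    constructor
    · intro hb
      exact h5 X Y {b} (hfs X Y hX hYfin hYsub) hb
    · intro hb
      exact hcmi X Y hX hYfin hYsub b hb
  -- the key consistency criterion
  have consGood : ∀ S : Set (Tok α),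
      (∀ a : α, Sum.inl a ∈ S → a ∈ Tilde snake P) →
      (∀ Q : Set α, Sum.inr Q ∈ S → Con Q ∧ Tilde snake Q = Tilde snake P) →
      IsCons (ConStarC Con snake) S := by
    intro S hA hT W hWS hWfin
    have hFfin : (Sum.inl ⁻¹' W : Set α).Finite :=
      hWfin.preimage (Sum.inl_injective.injOn)
    have hFsub : (Sum.inl ⁻¹' W : Set α) ⊆ Tilde snake P := fun a ha => hA a (hWS ha)
    refine ⟨hWfin, ?_, ?_, ?_⟩
    · have hsn : snake P (Sum.inl ⁻¹' W) := hfs P _ hP hFfin hFsub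
      exact h1 _ (P ∪ Sum.inl ⁻¹' W) Set.subset_union_right (h3 P _ hsn)
    · intro X Y hX hY
      rw [(hT X (hWS hX)).2, (hT Y (hWS hY)).2]
    · intro X hX
      obtain ⟨hXC, hXt⟩ := hT X (hWS hX)
      exact hfs X _ hXC hFfin (by rw [hXt]; exact hFsub)
  -- membership facts for deltaP
  have hinlδ : ∀ a : α, Sum.inl a ∈ deltaP Con snake P ↔ a ∈ Tilde snake P := by
    intro a
    constructor
    · rintro (⟨b, hb, heq⟩ | ⟨Q, _, _, _, heq⟩)
      · cases heq; exact hb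
      · exact absurd heq (by simp)
    · intro ha
      exact Or.inl ⟨a, ha, rfl⟩
  have hinrδ : ∀ Q : Set α, Sum.inr Q ∈ deltaP Con snake P ↔
      Con Q ∧ Q ⊆ Tilde snake P ∧ Tilde snake Q = Tilde snake P := by
    intro Q
    constructor
    · rintro (⟨b, _, heq⟩ | ⟨R, hRC, hRs, hRt, heq⟩)
      · exact absurd heq (by simp)
      · cases (Sum.inr_injective (heq.symm) : R = Q); exact ⟨hRC, hRs, hRt⟩
    · rintro ⟨hQC, hQs, hQt⟩
      exact Or.inr ⟨Q, hQC, hQs, hQt, rfl⟩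
  have hPδ : Sum.inr P ∈ deltaP Con snake P :=
    (hinrδ P).mpr ⟨hP, hmemT P hP, rfl⟩
  have hδcons : IsCons (ConStarC Con snake) (deltaP Con snake P) := by
    apply consGood
    · intro a ha; exact (hinlδ a).mp ha
    · intro Q hQ
      obtain ⟨hc, _, ht⟩ := (hinrδ Q).mp hQ
      exact ⟨hc, ht⟩
  have hconsTok : ∀ Q : Set α, Con Q → Tilde snake Q = Tilde snake P →
      IsCons (ConStarC Con snake) ({Sum.inr Q} ∪ deltaP Con snake P) := by
    intro Q hQC hQt
    apply consGood
    · rintro a (ha | ha)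
      · simp at ha
      · exact (hinlδ a).mp ha
    · rintro R (hR | hR)
      · simp only [Set.mem_singleton_iff, Sum.inr.injEq] at hR
        subst hR; exact ⟨hQC, hQt⟩
      · obtain ⟨hc, _, ht⟩ := (hinrδ R).mp hR
        exact ⟨hc, ht⟩
  have hconsA : ∀ a : α, a ∈ Tilde snake P →
      IsCons (ConStarC Con snake) ({Sum.inl a} ∪ deltaP Con snake P) := by
    intro a ha
    apply consGood
    · rintro b (hb | hb)
      · simp only [Set.mem_singleton_iff, Sum.inl.injEq] at hb
        subst hb; exact ha
      · exact (hinlδ b).mp hb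
    · rintro R (hR | hR)
      · simp at hR
      · obtain ⟨hc, _, ht⟩ := (hinrδ R).mp hR
        exact ⟨hc, ht⟩
  have hΔ1 : ∀ X : Set α, Con X → (Sum.inl '' X, Sum.inr X) ∈ DeltaCan Con snake :=
    fun X hX => Or.inl ⟨X, hX, rfl⟩
  have hΔ2 : ∀ (X : Set α) (a : α), Con X → snake X {a} → a ∉ X →
      (({Sum.inr X} : Set (Tok α)), Sum.inl a) ∈ DeltaCan Con snake :=
    fun X a hc hs hn => Or.inr ⟨X, a, hc, hs, hn, rfl⟩
  have hph0 : phiT (ConStarC Con snake) (DeltaCan Con snake) (Sum.inl '' P)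
      (deltaP Con snake P) 0 = Sum.inl '' P := rfl
  constructor
  · -- existence
    refine ⟨hδcons, ?_⟩
    apply subset_antisymm
    · apply Set.iUnion_subset
      intro i
      induction i with
      | zero =>
        rw [hph0]
        rintro t ⟨a, ha, rfl⟩
        exact (hinlδ a).mpr (hmemT P hP ha)
      | succ i ih =>
        rintro t (ht | ⟨X, hXΔ, hXsub, hXcons⟩)
        · exact ih ht
        · rcases hXΔ with ⟨Y, hYC, heq⟩ | ⟨Y, a, hYC, hsn, hna, heq⟩
          · rw [Prod.mk.injEq] at heq
            obtain ⟨rfl, rfl⟩ := heq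
            refine (hinrδ Y).mpr ⟨hYC, ?_, ?_⟩
            · intro y hy
              exact (hinlδ y).mp (ih (hXsub ⟨y, hy, rfl⟩))
            · have hsub : ({Sum.inr Y, Sum.inr P} : Set (Tok α)) ⊆
                  {Sum.inr Y} ∪ deltaP Con snake P := by
                rintro t (rfl | rfl)
                · exact Or.inl rfl
                · exact Or.inr hPδ
              obtain ⟨_, _, hpair, _⟩ := hXcons _ hsub
                ((Set.finite_singleton _).insert _)
              exact hpair Y P (Set.mem_insert _ _) (Set.mem_insert_of_mem _ rfl)
          · rw [Prod.mk.injEq] at heq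
            obtain ⟨rfl, rfl⟩ := heq
            have hYδ := ih (hXsub rfl)
            obtain ⟨_, _, hYt⟩ := (hinrδ Y).mp hYδ
            exact (hinlδ a).mpr (hYt ▸ hsn)
    · have hs1 : Sum.inr P ∈ phiT (ConStarC Con snake) (DeltaCan Con snake)
          (Sum.inl '' P) (deltaP Con snake P) 1 :=
        Or.inr ⟨Sum.inl '' P, hΔ1 P hP, hph0.symm.subset, hconsTok P hP rfl⟩
      have ht2 : ∀ a : α, a ∈ Tilde snake P → Sum.inl a ∈
          phiT (ConStarC Con snake) (DeltaCan Con snake) (Sum.inl '' P)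
            (deltaP Con snake P) 2 := by
        intro a ha
        by_cases haP : a ∈ P
        · exact phiT_mono _ _ _ _ (Nat.zero_le 2) (hph0.symm ▸ ⟨a, haP, rfl⟩)
        · exact Or.inr ⟨{Sum.inr P}, hΔ2 P a hP ha haP,
            Set.singleton_subset_iff.mpr hs1, hconsA a ha⟩
      rintro t (⟨a, ha, rfl⟩ | ⟨Q, hQC, hQs, hQt, rfl⟩)
      · exact phiT_subset_PhiT _ _ _ _ 2 (ht2 a ha)
      · refine phiT_subset_PhiT _ _ _ _ 3 (Or.inr ⟨Sum.inl '' Q, hΔ1 Q hQC, ?_,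
          hconsTok Q hQC hQt⟩)
        rintro t ⟨q, hq, rfl⟩
        exact ht2 q (hQs hq)
  · -- uniqueness
    rintro W ⟨hWcons, hWfix⟩
    have hph0W : phiT (ConStarC Con snake) (DeltaCan Con snake) (Sum.inl '' P) W 0
        = Sum.inl '' P := rfl
    have hxW : Sum.inl '' P ⊆ W := by
      rw [← hWfix]
      exact hph0W ▸ phiT_subset_PhiT _ _ _ _ 0
    have A1 : ∀ (i : ℕ) (X : Set α),
        Sum.inr X ∈ phiT (ConStarC Con snake) (DeltaCan Con snake) (Sum.inl '' P) W i →
        Con X ∧ Sum.inl '' X ⊆ W := by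
      intro i
      induction i with
      | zero =>
        intro X hX
        rw [hph0W] at hX
        obtain ⟨a, _, h⟩ := hX
        exact absurd h (by simp)
      | succ i ih =>
        rintro X (hX | ⟨Y, hYΔ, hYsub, _⟩)
        · exact ih X hX
        · rcases hYΔ with ⟨Z, hZC, heq⟩ | ⟨Z, a, _, _, _, heq⟩
          · rw [Prod.mk.injEq] at heq
            obtain ⟨rfl, hzx⟩ := heq
            cases Sum.inr_injective hzx
            refine ⟨hZC, ?_⟩
            intro t ht
            rw [← hWfix]
            exact phiT_subset_PhiT _ _ _ _ i (hYsub ht)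
          · simp [Prod.mk.injEq] at heq
    have A1' : ∀ X : Set α, Sum.inr X ∈ W → Con X ∧ Sum.inl '' X ⊆ W := by
      intro X hX
      have : Sum.inr X ∈ PhiT (ConStarC Con snake) (DeltaCan Con snake) (Sum.inl '' P) W := by
        rw [hWfix]; exact hX
      obtain ⟨i, hi⟩ := Set.mem_iUnion.mp this
      exact A1 i X hi
    have snakeW : ∀ X : Set α, Sum.inr X ∈ W → ∀ F : Set α, F.Finite →
        (∀ a ∈ F, Sum.inl a ∈ W) → snake X F := by
      intro X hX F hFfin hFW
      have hsub : insert (Sum.inr X) (Sum.inl '' F) ⊆ W := by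
        refine Set.insert_subset hX ?_
        rintro t ⟨a, ha, rfl⟩
        exact hFW a ha
      obtain ⟨_, _, _, h3'⟩ := hWcons _ hsub ((hFfin.image _).insert _)
      have hpre : Sum.inl ⁻¹' (insert (Sum.inr X) (Sum.inl '' (F : Set α)) : Set (Tok α)) = F := by
        ext a
        simp
      have := h3' X (Set.mem_insert _ _)
      rwa [hpre] at this
    have pairW : ∀ X Y : Set α, Sum.inr X ∈ W → Sum.inr Y ∈ W →
        Tilde snake X = Tilde snake Y := by
      intro X Y hX hY
      obtain ⟨_, _, hp, _⟩ := hWcons {Sum.inr X, Sum.inr Y}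
        (by rintro t (rfl | rfl); exacts [hX, hY]) ((Set.finite_singleton _).insert _)
      exact hp X Y (Set.mem_insert _ _) (Set.mem_insert_of_mem _ rfl)
    have hfirst : ∃ X0 : Set α, Sum.inr X0 ∈ W ∧ X0 ⊆ P := by
      by_contra hno
      push_neg at hno
      have hallP : ∀ i, phiT (ConStarC Con snake) (DeltaCan Con snake)
          (Sum.inl '' P) W i ⊆ Sum.inl '' P := by
        intro i
        induction i with
        | zero => rw [hph0W]
        | succ i ih =>
          rintro t (ht | ht2)
          · exact ih ht
          · have htW : t ∈ W := by
              rw [← hWfix]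
              exact phiT_subset_PhiT _ _ _ _ (i + 1) (Or.inr ht2)
            obtain ⟨X, hXΔ, hXsub, _⟩ := ht2
            rcases hXΔ with ⟨Z, hZC, heq⟩ | ⟨Z, a, _, _, _, heq⟩
            · rw [Prod.mk.injEq] at heq
              obtain ⟨rfl, rfl⟩ := heq
              exfalso
              refine hno Z htW ?_
              intro z hz
              obtain ⟨p, hp, hpe⟩ := ih (hXsub ⟨z, hz, rfl⟩)
              cases Sum.inl_injective hpe
              exact hp
            · rw [Prod.mk.injEq] at heq
              obtain ⟨rfl, rfl⟩ := heq
              obtain ⟨p, _, hpe⟩ := ih (hXsub rfl)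
              simp at hpe
      have hWP : W = Sum.inl '' P := by
        refine subset_antisymm ?_ hxW
        rw [← hWfix]
        exact Set.iUnion_subset hallP
      have hcons1 : IsCons (ConStarC Con snake) ({Sum.inr P} ∪ W) := by
        rw [hWP]
        apply consGood
        · rintro a (ha | ⟨b, hb, hba⟩)
          · simp at ha
          · cases Sum.inl_injective hba
            exact hmemT P hP hb
        · rintro R (hR | ⟨b, _, hb⟩)
          · simp only [Set.mem_singleton_iff, Sum.inr.injEq] at hR
            subst hR
            exact ⟨hP, rfl⟩
          · simp at hb
      have hPW : Sum.inr P ∈ W := by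
        rw [← hWfix]
        exact phiT_subset_PhiT _ _ _ _ 1
          (Or.inr ⟨Sum.inl '' P, hΔ1 P hP, hph0W.symm.subset, hcons1⟩)
      exact hno P hPW (subset_refl P)
    obtain ⟨X0, hX0W, hX0P⟩ := hfirst
    obtain ⟨hX0C, hX0s⟩ := A1' X0 hX0W
    have hPT : P ⊆ Tilde snake X0 := by
      intro p hp
      refine snakeW X0 hX0W {p} (Set.finite_singleton p) ?_
      intro a ha
      rw [Set.mem_singleton_iff] at ha
      subst ha
      exact hxW ⟨a, hp, rfl⟩
    have hT0 : Tilde snake X0 = Tilde snake P := by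
      have h := htileq X0 P hX0C (hCfin P hP) hPT
      rw [Set.union_eq_self_of_subset_left hX0P] at h
      exact h.symm
    have hTsub : ∀ a : α, Sum.inl a ∈ W → a ∈ Tilde snake P := by
      intro a ha
      rw [← hT0]
      refine snakeW X0 hX0W {a} (Set.finite_singleton a) ?_
      intro b hb
      rw [Set.mem_singleton_iff] at hb
      subst hb
      exact ha
    have hTsup : ∀ a : α, a ∈ Tilde snake P → Sum.inl a ∈ W := by
      intro a ha
      have haX0 : snake X0 {a} := by
        show a ∈ Tilde snake X0
        rw [hT0]
        exact ha
      by_cases haX : a ∈ X0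
      · exact hX0s ⟨a, haX, rfl⟩
      · have hX0Phi : Sum.inr X0 ∈ PhiT (ConStarC Con snake) (DeltaCan Con snake)
            (Sum.inl '' P) W := by
          rw [hWfix]; exact hX0W
        obtain ⟨i, hi⟩ := Set.mem_iUnion.mp hX0Phi
        have hconsa : IsCons (ConStarC Con snake) ({Sum.inl a} ∪ W) := by
          apply consGood
          · rintro b (hb | hb)
            · simp only [Set.mem_singleton_iff, Sum.inl.injEq] at hb
              subst hb
              exact ha
            · exact hTsub b hb
          · rintro R (hR | hR)
            · simp at hR
            · obtain ⟨hRC, _⟩ := A1' R hR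
              exact ⟨hRC, (pairW R X0 hR hX0W).trans hT0⟩
        rw [← hWfix]
        exact phiT_subset_PhiT _ _ _ _ (i + 1) (Or.inr ⟨{Sum.inr X0},
          hΔ2 X0 a hX0C haX0 haX, Set.singleton_subset_iff.mpr hi, hconsa⟩)
    ext t
    cases t with
    | inl a =>
      constructor
      · intro ht
        exact (hinlδ a).mpr (hTsub a ht)
      · intro ht
        exact hTsup a ((hinlδ a).mp ht)
    | inr Q =>
      constructor
      · intro ht
        obtain ⟨hQC, hQs⟩ := A1' Q ht
        refine (hinrδ Q).mpr ⟨hQC, ?_, (pairW Q X0 ht hX0W).trans hT0⟩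
        intro q hq
        exact hTsub q (hQs ⟨q, hq, rfl⟩)
      · intro ht
        obtain ⟨hQC, hQs, hQt⟩ := (hinrδ Q).mp ht
        have hQW : Sum.inl '' Q ⊆ PhiT (ConStarC Con snake) (DeltaCan Con snake)
            (Sum.inl '' P) W := by
          rw [hWfix]
          rintro u ⟨q, hq, rfl⟩
          exact hTsup q (hQs hq)
        obtain ⟨i, hi⟩ := finite_subset_phiT _ _ _ _ ((hCfin Q hQC).image _) hQW
        have hconsQ : IsCons (ConStarC Con snake) ({Sum.inr Q} ∪ W) := by
          apply consGood
          · rintro b (hb | hb)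
            · simp at hb
            · exact hTsub b hb
          · rintro R (hR | hR)
            · simp only [Set.mem_singleton_iff, Sum.inr.injEq] at hR
              subst hR
              exact ⟨hQC, hQt⟩
            · obtain ⟨hRC, _⟩ := A1' R hR
              exact ⟨hRC, (pairW R X0 hR hX0W).trans hT0⟩
        rw [← hWfix]
        exact phiT_subset_PhiT _ _ _ _ (i + 1)
          (Or.inr ⟨Sum.inl '' Q, hΔ1 Q hQC, hi, hconsQ⟩)
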